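/- For every real x > 0, F(x) = lim_{n→∞} P_n(x)/Q_n(x), i.e. the continued fraction 1/(x + 1/(1 + 1/(x + 1/(1/2 + ...)))) with partial quotients c_m (c_m = x for odd m, c_m = 2/m for even m) converges to F(x) = ∫_0^∞ e^{-t}/(t+x) dt. -/

import Mathlib

noncomputable def F (x : ℝ) : ℝ := ∫ t in Set.Ioi (0:ℝ), Real.exp (-t) / (t + x)
noncomputable def c (n : ℕ) (x : ℝ) : ℝ := if n % 2 = 1 then x else 2 / n

/-- `P n` is the paper's `P_{n-1}` (so `P 0 = P_{-1} = 1`, `P 1 = P_0 = 0`). -/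
noncomputable def P : ℕ → ℝ → ℝ
  | 0 => fun _ => 1
  | 1 => fun _ => 0
  | (n + 2) => fun x => c (n + 1) x * P (n + 1) x + P n x

/-- `Q n` is the paper's `Q_{n-1}` (so `Q 0 = Q_{-1} = 0`, `Q 1 = Q_0 = 1`). -/
noncomputable def Q : ℕ → ℝ → ℝ
  | 0 => fun _ => 0
  | 1 => fun _ => 1
  | (n + 2) => fun x => c (n + 1) x * Q (n + 1) x + Q n x


open MeasureTheory Real Set Filter


noncomputable def Jf (x : ℝ) (a b : ℕ) : ℝ → ℝ := fun t => Real.exp (-t) * t ^ a / (t + x) ^ b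

noncomputable def J (x : ℝ) (a b : ℕ) : ℝ := ∫ t in Set.Ioi (0:ℝ), Jf x a b t

lemma Jf_nonneg {x : ℝ} (hx : 0 < x) {a b : ℕ} {t : ℝ} (ht : 0 ≤ t) : 0 ≤ Jf x a b t := by
  have h1 : (0:ℝ) < t + x := by linarith
  unfold Jf
  positivity

lemma Jf_le {x : ℝ} (hx : 0 < x) {a b : ℕ} (hab : a ≤ b) {t : ℝ} (ht : 0 ≤ t) :
    Jf x a b t ≤ Real.exp (-t) / x ^ (b - a) := by
  have h1 : (0:ℝ) < t + x := by linarith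
  have h2 : t ^ a ≤ (t + x) ^ a := pow_le_pow_left₀ ht (by linarith) a
  have h3 : x ^ (b - a) ≤ (t + x) ^ (b - a) := pow_le_pow_left₀ hx.le (by linarith) _
  have h4 : (t + x) ^ b = (t + x) ^ a * (t + x) ^ (b - a) := by
    rw [← pow_add]; congr 1; omega
  rw [Jf, h4, div_le_div_iff₀ (by positivity) (by positivity)]
  calc Real.exp (-t) * t ^ a * x ^ (b - a)
      ≤ Real.exp (-t) * (t + x) ^ a * (t + x) ^ (b - a) := by
        apply mul_le_mul (by exact mul_le_mul_of_nonneg_left h2 (exp_pos _).le) h3 (by positivity)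
        positivity
    _ = Real.exp (-t) * ((t + x) ^ a * (t + x) ^ (b - a)) := by ring

lemma Jf_cont {x : ℝ} (hx : 0 < x) (a b : ℕ) {t : ℝ} (ht : 0 ≤ t) :
    ContinuousAt (Jf x a b) t := by
  have h1 : (0:ℝ) < t + x := by linarith
  exact (((Real.continuous_exp.comp continuous_neg).mul (continuous_pow a)).continuousAt).div
    (((continuous_id.add continuous_const).pow b).continuousAt) (by positivity)

lemma Jint {x : ℝ} (hx : 0 < x) {a b : ℕ} (hab : a ≤ b) :
    IntegrableOn (Jf x a b) (Set.Ioi (0:ℝ)) := by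
  have hm : AEStronglyMeasurable (Jf x a b) (volume.restrict (Ioi (0:ℝ))) := by
    apply ContinuousOn.aestronglyMeasurable _ measurableSet_Ioi
    exact fun t ht => ((Jf_cont hx a b (le_of_lt ht)).continuousWithinAt)
  have hbound : IntegrableOn (fun t => Real.exp (-t) / x ^ (b - a)) (Ioi (0:ℝ)) := by
    have := (exp_neg_integrableOn_Ioi (0:ℝ) (zero_lt_one)).div_const (x ^ (b-a))
    simp only [neg_mul, one_mul] at this
    exact this
  refine Integrable.mono hbound hm ?_
  filter_upwards [ae_restrict_mem measurableSet_Ioi] with t ht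
  rw [Real.norm_eq_abs, abs_of_nonneg (Jf_nonneg hx ht.le), Real.norm_eq_abs]
  exact le_trans (Jf_le hx hab ht.le) (le_abs_self _)

lemma J_nonneg {x : ℝ} (hx : 0 < x) (a b : ℕ) : 0 ≤ J x a b := by
  apply setIntegral_nonneg measurableSet_Ioi
  exact fun t ht => Jf_nonneg hx (le_of_lt ht)

lemma J_alg {x : ℝ} (hx : 0 < x) (k : ℕ) :
    x * J x k (k+1) - J x k k = - J x (k+1) (k+1) := by
  have h1 := (Jint hx ((show k ≤ k+1 by omega))).const_mul x
  have h2 := Jint hx (le_refl k)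
  rw [J, J, J, ← MeasureTheory.integral_const_mul, ← MeasureTheory.integral_sub h1 h2,
    ← MeasureTheory.integral_neg]
  apply setIntegral_congr_fun measurableSet_Ioi
  intro t ht
  have h1 : (0:ℝ) < t + x := by have := ht.out; linarith
  simp only [Jf]
  field_simp
  ring

lemma J_ibp {x : ℝ} (hx : 0 < x) (k : ℕ) :
    (k+1:ℝ) * J x k (k+1) - J x (k+1) (k+1) = (k+1:ℝ) * J x (k+1) (k+2) := by
  set f : ℝ → ℝ := fun t => Real.exp (-t) * t ^ (k+1) / (t + x) ^ (k+1) with hf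
  set g : ℝ → ℝ := fun t => (k+1:ℝ) * Jf x k (k+1) t - Jf x (k+1) (k+1) t
      - (k+1:ℝ) * Jf x (k+1) (k+2) t with hg
  have hderiv : ∀ t ∈ Ici (0:ℝ), HasDerivAt f (g t) t := by
    intro t ht
    have h1 : (0:ℝ) < t + x := by have := ht.out; linarith
    have he : HasDerivAt (fun t : ℝ => Real.exp (-t)) (-Real.exp (-t)) t := by
      simpa [Function.comp_def] using (Real.hasDerivAt_exp (-t)).comp t (hasDerivAt_neg t)
    have hp : HasDerivAt (fun t : ℝ => t ^ (k+1)) ((k+1:ℝ) * t ^ k) t := by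
      simpa using hasDerivAt_pow (k+1) t
    have hu := he.mul hp
    have hq : HasDerivAt (fun t : ℝ => (t + x) ^ (k+1)) ((k+1:ℝ) * (t + x) ^ k) t := by
      simpa [Function.comp_def] using ((hasDerivAt_pow (k+1) (t+x)).comp t ((hasDerivAt_id t).add_const x))
    have hv := hq.inv (ne_of_gt (pow_pos h1 _))
    have := hu.mul hv
    have heq : f = fun t => (Real.exp (-t) * t ^ (k+1)) * ((t + x) ^ (k+1))⁻¹ := by
      funext s; rw [hf]; ring
    rw [heq]
    refine this.congr_deriv ?_
    rw [hg]
    simp only [Jf, Pi.mul_apply, Pi.inv_apply]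
    field_simp
    ring
  have hint : IntegrableOn g (Ioi (0:ℝ)) := by
    exact (((Jint hx ((show k ≤ k+1 by omega))).const_mul _).sub (Jint hx (le_refl (k+1)))).sub
      ((Jint hx (by omega)).const_mul _)
  have hlim : Tendsto f atTop (nhds 0) := by
    apply squeeze_zero' (g := fun t => Real.exp (-t))
    · filter_upwards [eventually_ge_atTop (0:ℝ)] with t ht
      exact Jf_nonneg hx ht
    · filter_upwards [eventually_ge_atTop (0:ℝ)] with t ht
      simpa [hf, Jf] using Jf_le hx (le_refl (k+1)) ht
    · exact Real.tendsto_exp_neg_atTop_nhds_zero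
  have h0 : f 0 = 0 := by simp [hf]
  have key := integral_Ioi_of_hasDerivAt_of_tendsto' hderiv hint hlim
  rw [h0, sub_zero] at key
  have hsplit : ∫ t in Ioi (0:ℝ), g t
      = (k+1:ℝ) * J x k (k+1) - J x (k+1) (k+1) - (k+1:ℝ) * J x (k+1) (k+2) := by
    have i1 := (Jint hx ((show k ≤ k+1 by omega))).const_mul ((k:ℝ)+1)
    have i2 := Jint hx (le_refl (k+1))
    have i3 := (Jint hx (show k+1 ≤ k+2 by omega)).const_mul ((k:ℝ)+1)
    have e := MeasureTheory.integral_sub (i1.sub i2) i3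
    have e2 := MeasureTheory.integral_sub i1 i2
    simp only [Pi.sub_apply] at e e2
    rw [hg]
    beta_reduce
    rw [e, e2, MeasureTheory.integral_const_mul, MeasureTheory.integral_const_mul]
    rfl
  rw [hsplit] at key
  linarith


lemma Q_step (n : ℕ) (x : ℝ) : Q (n+2) x = c (n+1) x * Q (n+1) x + Q n x := rfl
lemma P_step (n : ℕ) (x : ℝ) : P (n+2) x = c (n+1) x * P (n+1) x + P n x := rfl

lemma F_eq_J {x : ℝ} : F x = J x 0 1 := by
  simp [F, J, Jf]

lemma J00 {x : ℝ} : J x 0 0 = 1 := by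
  simp [J, Jf]
  exact integral_exp_Iic_zero

lemma key {x : ℝ} (hx : 0 < x) (k : ℕ) :
    (Q (2*k+1) x * F x - P (2*k+1) x = J x k (k+1)) ∧
    (Q (2*k+2) x * F x - P (2*k+2) x = - J x (k+1) (k+1)) := by
  induction k with
  | zero =>
    constructor
    · simp only [Nat.mul_zero, Nat.zero_add]
      simp [P, Q, F_eq_J]
    · simp only [Nat.mul_zero, Nat.zero_add]
      show Q (0+2) x * F x - P (0+2) x = - J x 1 1
      simp only [P, Q, c]
      norm_num
      have := J_alg hx 0
      rw [J00] at this
      rw [F_eq_J]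
      linarith
  | succ k ih =>
    obtain ⟨hA, hB⟩ := ih
    have hc : c (2*k+2) x = 1/((k:ℝ)+1) := by
      rw [c, if_neg (by omega)]
      push_cast
      field_simp
    have hco : c (2*k+3) x = x := by
      rw [c, if_pos (by omega)]
    have hkne : ((k:ℝ)+1) ≠ 0 := by positivity
    have hAn : Q (2*(k+1)+1) x * F x - P (2*(k+1)+1) x = J x (k+1) (k+2) := by
      have h1 : Q (2*(k+1)+1) x * F x - P (2*(k+1)+1) x
          = c (2*k+2) x * (Q (2*k+2) x * F x - P (2*k+2) x)
            + (Q (2*k+1) x * F x - P (2*k+1) x) := by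
        show Q (2*k+1+2) x * F x - P (2*k+1+2) x = _
        rw [Q_step, P_step, show 2*k+1+1 = 2*k+2 from by omega]
        ring
      rw [h1, hA, hB, hc]
      have := J_ibp hx k
      field_simp
      linarith
    refine ⟨hAn, ?_⟩
    have h2 : Q (2*(k+1)+2) x * F x - P (2*(k+1)+2) x
        = c (2*k+3) x * (Q (2*(k+1)+1) x * F x - P (2*(k+1)+1) x)
          + (Q (2*k+2) x * F x - P (2*k+2) x) := by
      show Q (2*k+2+2) x * F x - P (2*k+2+2) x = _
      rw [Q_step, P_step, show 2*k+2+1 = 2*k+3 from by omega,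
        show 2*(k+1)+1 = 2*k+3 from by omega]
      ring
    rw [h2, hAn, hB, hco]
    have := J_alg hx (k+1)
    have e2 : k+1+1 = k+2 := by omega
    rw [e2] at this
    linarith

lemma c_pos {x : ℝ} (hx : 0 < x) {n : ℕ} (hn : 1 ≤ n) : 0 < c n x := by
  rw [c]
  split
  · exact hx
  · have : 0 < (n:ℝ) := by exact_mod_cast hn
    positivity

lemma Q_lb {x : ℝ} (hx : 0 < x) : ∀ n, 0 ≤ Q n x ∧ (1 ≤ n → min x 1 ≤ Q n x) := by
  intro n
  induction n using Nat.strong_induction_on with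
  | _ n ih =>
    match n with
    | 0 => simp [Q]
    | 1 =>
      refine ⟨by simp [Q], fun _ => ?_⟩
      show min x 1 ≤ 1
      exact min_le_right x 1
    | (n+2) =>
      obtain ⟨h1, h1'⟩ := ih (n+1) (by omega)
      obtain ⟨h0, h0'⟩ := ih n (by omega)
      have hc := c_pos hx (n := n+1) (by omega)
      rw [Q_step]
      have hm := mul_nonneg hc.le h1
      refine ⟨by linarith, fun _ => ?_⟩
      match n with
      | 0 =>
        have : c 1 x = x := by rw [c]; simp
        simp only [Q, this]
        have : min x 1 ≤ x := min_le_left x 1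
        linarith
      | (m+1) =>
        have := h0' (by omega)
        linarith

lemma E_tendsto {x : ℝ} (hx : 0 < x) : Tendsto (fun k => J x k k) atTop (nhds 0) := by
  have hexp : IntegrableOn (fun t => Real.exp (-t)) (Ioi (0:ℝ)) := by
    simpa using exp_neg_integrableOn_Ioi 0 one_pos
  have := MeasureTheory.tendsto_integral_of_dominated_convergence
    (μ := volume.restrict (Ioi (0:ℝ))) (F := fun k => Jf x k k) (f := fun _ => 0)
    (bound := fun t => Real.exp (-t))
    (fun k => (Jint hx (le_refl k)).aestronglyMeasurable)
    hexp
    (fun k => by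
      filter_upwards [ae_restrict_mem measurableSet_Ioi] with t ht
      rw [Real.norm_eq_abs, abs_of_nonneg (Jf_nonneg hx ht.out.le)]
      simpa using Jf_le hx (le_refl k) ht.out.le)
    (by
      filter_upwards [ae_restrict_mem measurableSet_Ioi] with t ht
      have ht0 : (0:ℝ) < t := ht.out
      have hxt : (0:ℝ) < t + x := by linarith
      have hr0 : (0:ℝ) ≤ t / (t + x) := by positivity
      have hr1 : t / (t + x) < 1 := by rw [div_lt_one hxt]; linarith
      have heq : ∀ k : ℕ, Jf x k k t = Real.exp (-t) * (t / (t + x)) ^ k := by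
        intro k; rw [Jf, div_pow]; ring
      simp only [heq]
      simpa using (tendsto_pow_atTop_nhds_zero_of_lt_one hr0 hr1).const_mul (Real.exp (-t)))
  simpa [J] using this

lemma Jk1_le {x : ℝ} (hx : 0 < x) (k : ℕ) : J x k (k+1) ≤ x⁻¹ * J x k k := by
  rw [J, J, ← MeasureTheory.integral_const_mul]
  apply setIntegral_mono_on (Jint hx (by omega)) ((Jint hx (le_refl k)).const_mul _)
    measurableSet_Ioi
  intro t ht
  have ht0 : (0:ℝ) < t := ht.out
  have hxt : (0:ℝ) < t + x := by linarith
  rw [Jf, Jf, pow_succ, ← div_div, inv_mul_eq_div]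
  exact div_le_div_of_nonneg_left (by positivity) hx (by linarith)

lemma err_tendsto {x : ℝ} (hx : 0 < x) :
    Tendsto (fun n => Q (n+1) x * F x - P (n+1) x) atTop (nhds 0) := by
  set u : ℕ → ℝ := fun k => x⁻¹ * J x k k + J x (k+1) (k+1) with hu
  have hut : Tendsto u atTop (nhds 0) := by
    have h1 := (E_tendsto hx).const_mul x⁻¹
    have h2 := (E_tendsto hx).comp (tendsto_add_atTop_nat 1)
    have := h1.add h2
    simpa using this
  have hdiv : Tendsto (fun n : ℕ => n / 2) atTop atTop :=
    tendsto_atTop_atTop.2 fun b => ⟨2 * b, fun n hn => by omega⟩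
  apply squeeze_zero_norm _ (hut.comp hdiv)
  intro n
  rcases Nat.even_or_odd n with ⟨k, hk⟩ | ⟨k, hk⟩
  · have h := (key hx k).1
    have hn : n + 1 = 2 * k + 1 := by omega
    have hn2 : n / 2 = k := by omega
    simp only [Function.comp_def]
    rw [hn, h, hn2]
    rw [Real.norm_eq_abs, abs_of_nonneg (J_nonneg hx _ _)]
    have := Jk1_le hx k
    have := J_nonneg hx (k+1) (k+1)
    simp only [hu]
    linarith
  · have h := (key hx k).2
    have hn : n + 1 = 2 * k + 2 := by omega
    have hn2 : n / 2 = k := by omega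
    simp only [Function.comp_def]
    rw [hn, h, hn2]
    rw [Real.norm_eq_abs, abs_neg, abs_of_nonneg (J_nonneg hx _ _)]
    have := J_nonneg hx k k
    simp only [hu]
    have : 0 ≤ x⁻¹ * J x k k := by positivity
    linarith


/-- `P (n+1)`, `Q (n+1)` are the paper's `P_n`, `Q_n`. -/
theorem stmt_18 (x : ℝ) (hx : 0 < x) :
    Filter.Tendsto (fun n : ℕ => P (n + 1) x / Q (n + 1) x) Filter.atTop (nhds (F x)) := by
  rw [← tendsto_sub_nhds_zero_iff]
  have hmin : 0 < min x 1 := lt_min hx one_pos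
  have hQ : ∀ n : ℕ, min x 1 ≤ Q (n+1) x := fun n => (Q_lb hx (n+1)).2 (by omega)
  have hQpos : ∀ n : ℕ, 0 < Q (n+1) x := fun n => lt_of_lt_of_le hmin (hQ n)
  apply squeeze_zero_norm (a := fun n => ‖Q (n+1) x * F x - P (n+1) x‖ / min x 1)
  · intro n
    have hQn := hQpos n
    have heq : P (n+1) x / Q (n+1) x - F x
        = -(Q (n+1) x * F x - P (n+1) x) / Q (n+1) x := by
      field_simp
      ring
    rw [heq, norm_div, norm_neg, Real.norm_eq_abs (Q (n+1) x), abs_of_pos hQn]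
    exact div_le_div_of_nonneg_left (norm_nonneg _) hmin (hQ n)
  · have := (err_tendsto hx).norm.div_const (min x 1)
    simpa using this
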